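/- Let D be an n×n real matrix, λ a nonzero real number, α and β n×1 column vectors, and L an n×n matrix. If α^T D = λ j^T and L D + I = β j^T (where j is the all-ones vector), then D is invertible and D^{-1} = -L + (1/λ) β α^T. -/
import Mathlib


open Matrix

theorem stmt_0 {n : ℕ} (D L : Matrix (Fin n) (Fin n) ℝ) (lam : ℝ) (hlam : lam ≠ 0)
    (α β : Fin n → ℝ)
    (h1 : vecMul α D = fun _ => lam)
    (h2 : L * D + 1 = vecMulVec β (fun _ => 1)) :
    IsUnit D.det ∧ D⁻¹ = -L + lam⁻¹ • vecMulVec β α := by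
  have hv : vecMulVec β α * D = vecMulVec β (fun _ => lam) := by
    ext i j
    have hj := congrFun h1 j
    simp only [vecMul, dotProduct] at hj
    simp only [mul_apply, vecMulVec_apply]
    calc ∑ k, β i * α k * D k j = β i * ∑ k, α k * D k j := by
          rw [Finset.mul_sum]; congr 1; ext k; ring
      _ = β i * lam := by rw [hj]
  have key : (-L + lam⁻¹ • vecMulVec β α) * D = 1 := by
    rw [add_mul, neg_mul, smul_mul_assoc, hv]
    have h3 : L * D = vecMulVec β (fun _ => 1) - 1 := by
      rw [← h2, add_sub_cancel_right]
    rw [h3]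
    have h4 : lam⁻¹ • vecMulVec β (fun _ : Fin n => lam) = vecMulVec β (fun _ : Fin n => 1) := by
      ext i j
      simp [vecMulVec_apply]
      field_simp
    rw [h4]; abel
  refine ⟨Matrix.isUnit_det_of_left_inverse key, Matrix.inv_eq_left_inv key⟩
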